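/- arXiv:1403.3781 — 4 statements merged into one kernel-verified Lean document; each statement's English description precedes it below -/
import Mathlib

section
/- Let H be an infinite-dimensional complex Hilbert space. For every k ≥ 1, the inductive geometric mean Gₖ is congruence invariant: for every invertible bounded operator C on H and every k-tuple (A₁,…,Aₖ) of positive definite invertible bounded operators, Gₖ(C*A₁C, …, C*AₖC) = C* Gₖ(A₁,…,Aₖ) C. -/
set_option synthInstance.maxHeartbeats 400000
set_option maxHeartbeats 1000000

open scoped NNReal

noncomputable section

variable {H : Type*} [NormedAddCommGroup H] [InnerProductSpace ℂ H] [CompleteSpace H]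

/-- `a` is a positive definite invertible bounded operator. -/
def IsPosDefInv (a : H →L[ℂ] H) : Prop := 0 ≤ a ∧ IsUnit a

/-- The inductive geometric mean: `indGM k` is the geometric mean `G_{k+1}` of `k+1`
operator variables, defined recursively by `G₁(A) = A` and
`G_{k+1}(A₁,…,A_{k+1}) = A_{k+1}^{1/2} Gₖ(A_{k+1}^{-1/2}A₁A_{k+1}^{-1/2},…,A_{k+1}^{-1/2}AₖA_{k+1}^{-1/2})^{k/(k+1)} A_{k+1}^{1/2}`,
with fractional powers taken via the continuous functional calculus. -/
noncomputable def indGM : (k : ℕ) → (Fin (k + 1) → (H →L[ℂ] H)) → (H →L[ℂ] H)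
  | 0, A => A 0
  | (k + 1), A =>
      CFC.sqrt (A (Fin.last (k + 1))) *
        CFC.rpow
          (indGM k (fun i : Fin (k + 1) =>
            CFC.sqrt (Ring.inverse (A (Fin.last (k + 1)))) * A i.castSucc *
              CFC.sqrt (Ring.inverse (A (Fin.last (k + 1))))))
          ((k + 1 : ℝ) / (k + 2)) *
        CFC.sqrt (A (Fin.last (k + 1)))

/- ### Auxiliary lemmas -/

section Aux

variable {M : Type*} [MonoidWithZero M]

lemma aux_ringInverse_eq {x y : M} (hx : IsUnit x) (h : x * y = 1) : Ring.inverse x = y := by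
  calc Ring.inverse x = Ring.inverse x * (x * y) := by rw [h, mul_one]
    _ = y := by rw [← mul_assoc, Ring.inverse_mul_cancel x hx, one_mul]

lemma aux_ringInverse_mul {x y : M} (hx : IsUnit x) (hy : IsUnit y) :
    Ring.inverse (x * y) = Ring.inverse y * Ring.inverse x :=
  aux_ringInverse_eq (hx.mul hy) <| by
    rw [mul_assoc, ← mul_assoc y, Ring.mul_inverse_cancel y hy, one_mul,
      Ring.mul_inverse_cancel x hx]

end Aux

lemma aux_rpow_isUnit {a : H →L[ℂ] H} (ha : 0 ≤ a) (hu : IsUnit a) (r : ℝ) :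
    IsUnit (CFC.rpow a r) := by
  have h0 : IsStrictlyPositive a := hu.unit.isStrictlyPositive_iff.mpr ha
  exact ⟨⟨CFC.rpow a r, CFC.rpow a (-r),
    by simpa using CFC.rpow_mul_rpow_neg r h0,
    by simpa using CFC.rpow_neg_mul_rpow r h0⟩, rfl⟩

lemma aux_sqrt_isUnit {a : H →L[ℂ] H} (ha : 0 ≤ a) (hu : IsUnit a) : IsUnit (CFC.sqrt a) := by
  rw [CFC.sqrt_eq_rpow]
  exact aux_rpow_isUnit ha hu _

lemma aux_ringInverse_nonneg {a : H →L[ℂ] H} (ha : 0 ≤ a) (hu : IsUnit a) :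
    0 ≤ Ring.inverse a := by
  rw [← hu.unit_spec, Ring.inverse_unit,
    ← CFC.rpow_neg_one_eq_inv hu.unit (by rw [hu.unit_spec]; exact ha)]
  exact CFC.rpow_nonneg

lemma aux_sqrt_ringInverse {a : H →L[ℂ] H} (ha : 0 ≤ a) (hu : IsUnit a) :
    CFC.sqrt (Ring.inverse a) = Ring.inverse (CFC.sqrt a) := by
  have hs : IsUnit (CFC.sqrt a) := aux_sqrt_isUnit ha hu
  refine CFC.sqrt_unique ?_ (aux_ringInverse_nonneg (CFC.sqrt_nonneg _) hs)
  rw [← aux_ringInverse_mul hs hs, CFC.sqrt_mul_sqrt_self a ha]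

lemma aux_star_ringInverse_of_nonneg {a : H →L[ℂ] H} (ha : 0 ≤ a) :
    star (Ring.inverse a) = Ring.inverse a := by
  rw [← Ring.inverse_star, (IsSelfAdjoint.of_nonneg ha).star_eq]

lemma indGM_posDefInv : ∀ (k : ℕ) (A : Fin (k + 1) → (H →L[ℂ] H)),
    (∀ i, IsPosDefInv (A i)) → IsPosDefInv (indGM k A)
  | 0, A, hA => hA 0
  | (k + 1), A, hA => by
    obtain ⟨hB, hBu⟩ := hA (Fin.last (k + 1))
    have hiB : 0 ≤ CFC.sqrt (Ring.inverse (A (Fin.last (k + 1)))) := CFC.sqrt_nonneg _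
    have hiBu : IsUnit (CFC.sqrt (Ring.inverse (A (Fin.last (k + 1))))) :=
      aux_sqrt_isUnit (aux_ringInverse_nonneg hB hBu) (isUnit_ringInverse.mpr hBu)
    have hX : ∀ i : Fin (k + 1), IsPosDefInv
        (CFC.sqrt (Ring.inverse (A (Fin.last (k + 1)))) * A i.castSucc *
          CFC.sqrt (Ring.inverse (A (Fin.last (k + 1))))) := fun i =>
      ⟨(IsSelfAdjoint.of_nonneg hiB).conjugate_nonneg (hA i.castSucc).1,
        (hiBu.mul (hA i.castSucc).2).mul hiBu⟩
    obtain ⟨hM, hMu⟩ := indGM_posDefInv k _ hX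
    refine ⟨?_, ?_⟩
    · show (0 : H →L[ℂ] H) ≤ CFC.sqrt _ * CFC.rpow _ _ * CFC.sqrt _
      exact (IsSelfAdjoint.of_nonneg (CFC.sqrt_nonneg _)).conjugate_nonneg CFC.rpow_nonneg
    · exact ((aux_sqrt_isUnit hB hBu).mul (aux_rpow_isUnit hM hMu _)).mul
        (aux_sqrt_isUnit hB hBu)

/-- Conjugation by a unitary as a star algebra homomorphism. -/
def conjSAH (u : H →L[ℂ] H) (h1 : u * star u = 1) (h2 : star u * u = 1) :
    (H →L[ℂ] H) →⋆ₐ[ℂ] (H →L[ℂ] H) where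
  toFun a := u * a * star u
  map_one' := by simpa using h1
  map_mul' a b := by
    have h : u * a * star u * (u * b * star u) = u * a * (star u * u) * b * star u := by
      noncomm_ring
    rw [h, h2]
    noncomm_ring
  map_zero' := by simp
  map_add' a b := by noncomm_ring
  commutes' r := by
    simp only [Algebra.algebraMap_eq_smul_one, mul_smul_comm, smul_mul_assoc, mul_one, one_mul, h1]
  map_star' a := by simp only [star_mul, star_star]; noncomm_ring

lemma aux_conj_rpow (u a : H →L[ℂ] H) (h1 : u * star u = 1) (h2 : star u * u = 1)
    (ha : 0 ≤ a) (r : ℝ) (hr : 0 ≤ r) :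
    CFC.rpow (u * a * star u) r = u * CFC.rpow a r * star u := by
  have hφa : 0 ≤ u * a * star u := star_right_conjugate_nonneg ha u
  have hcont : Continuous (fun x : H →L[ℂ] H => u * x * star u) :=
    (continuous_mul_right (star u)).comp (continuous_mul_left u)
  have hf : ContinuousOn (fun x : ℝ≥0 => x ^ r) (spectrum ℝ≥0 a) :=
    NNReal.continuousOn_rpow_const (Or.inr hr)
  have := StarAlgHom.map_cfc (conjSAH u h1 h2) (fun x : ℝ≥0 => x ^ r) a hf hcont ha hφa
  simpa [CFC.rpow_def, conjSAH] using this.symm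

/-- **Congruence invariance of the inductive geometric mean.**
`Gₖ(C*A₁C,…,C*AₖC) = C* Gₖ(A₁,…,Aₖ) C` for every invertible operator `C`. -/
theorem indGM_congruence_invariant
    (hH : ¬ FiniteDimensional ℂ H) (k : ℕ)
    (C : H →L[ℂ] H) (hC : IsUnit C)
    (A : Fin (k + 1) → (H →L[ℂ] H)) (hA : ∀ i, IsPosDefInv (A i)) :
    indGM k (fun i => star C * A i * C) = star C * indGM k A * C := by
  induction k generalizing C with
  | zero => simp [indGM]
  | succ k ih =>
    obtain ⟨hB, hBu⟩ := hA (Fin.last (k + 1))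
    set B := A (Fin.last (k + 1)) with hBdef
    have hB' : (0 : H →L[ℂ] H) ≤ star C * B * C := star_left_conjugate_nonneg hB C
    have hB'u : IsUnit (star C * B * C) := (hC.star.mul hBu).mul hC
    set s := CFC.sqrt B with hsdef
    set s' := CFC.sqrt (star C * B * C) with hs'def
    have hs : (0 : H →L[ℂ] H) ≤ s := CFC.sqrt_nonneg _
    have hs' : (0 : H →L[ℂ] H) ≤ s' := CFC.sqrt_nonneg _
    have hsu : IsUnit s := aux_sqrt_isUnit hB hBu
    have hs'u : IsUnit s' := aux_sqrt_isUnit hB' hB'u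
    have hssa : star s = s := (IsSelfAdjoint.of_nonneg hs).star_eq
    have hs'sa : star s' = s' := (IsSelfAdjoint.of_nonneg hs').star_eq
    have hss : s * s = B := CFC.sqrt_mul_sqrt_self B hB
    have hs's' : s' * s' = star C * B * C := CFC.sqrt_mul_sqrt_self _ hB'
    have hinv : CFC.sqrt (Ring.inverse B) = Ring.inverse s := aux_sqrt_ringInverse hB hBu
    have hinv' : CFC.sqrt (Ring.inverse (star C * B * C)) = Ring.inverse s' :=
      aux_sqrt_ringInverse hB' hB'u
    have his : (0 : H →L[ℂ] H) ≤ Ring.inverse s := aux_ringInverse_nonneg hs hsu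
    have his' : (0 : H →L[ℂ] H) ≤ Ring.inverse s' := aux_ringInverse_nonneg hs' hs'u
    have hisSA : star (Ring.inverse s) = Ring.inverse s := aux_star_ringInverse_of_nonneg hs
    have his'SA : star (Ring.inverse s') = Ring.inverse s' := aux_star_ringInverse_of_nonneg hs'
    set D := Ring.inverse s' * star C * s with hDdef
    have hDu : IsUnit D := ((isUnit_ringInverse.mpr hs'u).mul hC.star).mul hsu
    have hDstar : star D = s * C * Ring.inverse s' := by
      rw [hDdef]
      simp only [star_mul, hssa, his'SA, star_star, mul_assoc]
    have hDD : D * star D = 1 := by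
      rw [hDstar, hDdef]
      calc Ring.inverse s' * star C * s * (s * C * Ring.inverse s')
          = Ring.inverse s' * ((star C * (s * s) * C) * Ring.inverse s') := by noncomm_ring
        _ = Ring.inverse s' * (s' * (s' * Ring.inverse s')) := by
            rw [hss, ← hs's']; noncomm_ring
        _ = 1 := by
            rw [Ring.mul_inverse_cancel _ hs'u, mul_one, Ring.inverse_mul_cancel _ hs'u]
    have hDsD : star D * D = 1 := by
      rw [hDstar, hDdef]
      have h1 : Ring.inverse s' * Ring.inverse s' = Ring.inverse (star C * B * C) := by
        rw [← hs's', aux_ringInverse_mul hs'u hs'u]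
      have h2 : Ring.inverse (star C * B * C)
          = Ring.inverse C * (Ring.inverse B * Ring.inverse (star C)) := by
        rw [aux_ringInverse_mul (hC.star.mul hBu) hC, aux_ringInverse_mul hC.star hBu]
      have h3 : Ring.inverse B = Ring.inverse s * Ring.inverse s := by
        rw [← hss, aux_ringInverse_mul hsu hsu]
      calc s * C * Ring.inverse s' * (Ring.inverse s' * star C * s)
          = s * (C * ((Ring.inverse s' * Ring.inverse s') * star C)) * s := by noncomm_ring
        _ = s * (C * (Ring.inverse C * (Ring.inverse B * (Ring.inverse (star C) * star C)))) * s
            := by rw [h1, h2]; noncomm_ring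
        _ = s * Ring.inverse B * s := by
            rw [Ring.inverse_mul_cancel _ hC.star, mul_one, Ring.mul_inverse_cancel_left _ _ hC]
        _ = (s * Ring.inverse s) * (Ring.inverse s * s) := by rw [h3]; noncomm_ring
        _ = 1 := by rw [Ring.mul_inverse_cancel _ hsu, Ring.inverse_mul_cancel _ hsu, one_mul]
    have hX : ∀ i : Fin (k + 1),
        IsPosDefInv (Ring.inverse s * A i.castSucc * Ring.inverse s) := fun i =>
      ⟨(IsSelfAdjoint.of_nonneg his).conjugate_nonneg (hA i.castSucc).1,
        ((isUnit_ringInverse.mpr hsu).mul (hA i.castSucc).2).mul (isUnit_ringInverse.mpr hsu)⟩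
    obtain ⟨hM, hMu⟩ := indGM_posDefInv k _ hX
    have hIH : indGM k
          (fun i => star (star D) * (Ring.inverse s * A i.castSucc * Ring.inverse s) * star D)
        = star (star D) * indGM k (fun i => Ring.inverse s * A i.castSucc * Ring.inverse s)
            * star D :=
      ih (star D) hDu.star _ hX
    have htuple : (fun i : Fin (k + 1) =>
          Ring.inverse s' * (star C * A i.castSucc * C) * Ring.inverse s')
        = fun i => star (star D) *
            (Ring.inverse s * A i.castSucc * Ring.inverse s) * star D := by
      funext i
      rw [star_star, hDstar, hDdef]
      calc Ring.inverse s' * (star C * A i.castSucc * C) * Ring.inverse s'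
          = Ring.inverse s' * star C * (1 * A i.castSucc * 1) * (C * Ring.inverse s') := by
            noncomm_ring
        _ = Ring.inverse s' * star C * ((s * Ring.inverse s) * A i.castSucc *
              (Ring.inverse s * s)) * (C * Ring.inverse s') := by
            rw [Ring.mul_inverse_cancel _ hsu, Ring.inverse_mul_cancel _ hsu]
        _ = Ring.inverse s' * star C * s *
              (Ring.inverse s * A i.castSucc * Ring.inverse s) * (s * C * Ring.inverse s') := by
            noncomm_ring
    have hα : (0 : ℝ) ≤ (k + 1 : ℝ) / (k + 2) := by positivity
    simp only [indGM]
    rw [hinv', hinv, htuple, hIH, star_star]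
    rw [aux_conj_rpow D _ hDD hDsD hM _ hα]
    rw [hDstar, hDdef]
    set R := CFC.rpow
      (indGM k fun i => Ring.inverse s * A i.castSucc * Ring.inverse s)
      ((k + 1 : ℝ) / (k + 2)) with hRdef
    calc s' * (Ring.inverse s' * star C * s * R * (s * C * Ring.inverse s')) * s'
        = (s' * Ring.inverse s') * (star C * (s * R * s) * C) * (Ring.inverse s' * s') := by
          noncomm_ring
      _ = star C * (s * R * s) * C := by
          rw [Ring.mul_inverse_cancel _ hs'u, Ring.inverse_mul_cancel _ hs'u, one_mul, mul_one]
end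
end

section
/- Let H be an infinite-dimensional complex Hilbert space. For every k ≥ 1, the inductive geometric mean Gₖ is jointly homogeneous: for all scalars t₁,…,tₖ > 0 and every k-tuple (A₁,…,Aₖ) of positive definite invertible bounded operators on H, Gₖ(t₁A₁, …, tₖAₖ) = (t₁⋯tₖ)^{1/k} Gₖ(A₁,…,Aₖ). -/
set_option synthInstance.maxHeartbeats 400000
set_option maxHeartbeats 1000000

noncomputable section

variable {H : Type*} [NormedAddCommGroup H] [InnerProductSpace ℂ H] [CompleteSpace H]

open scoped NNReal

namespace IndGMAux

lemma toNN_smul (t : ℝ) (ht : 0 ≤ t) (a : H →L[ℂ] H) : t • a = t.toNNReal • a := by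
  rw [NNReal.smul_def, Real.coe_toNNReal _ ht]

lemma sqrt_smul_nn (c : ℝ≥0) (a : H →L[ℂ] H) (ha : 0 ≤ a) :
    CFC.sqrt (c • a) = NNReal.sqrt c • CFC.sqrt a := by
  rw [CFC.sqrt_eq_cfc, CFC.sqrt_eq_cfc, ← cfc_comp_smul c NNReal.sqrt a (by fun_prop) ha]
  calc cfc (fun x : ℝ≥0 => NNReal.sqrt (c • x)) a
      = cfc (fun x : ℝ≥0 => NNReal.sqrt c • NNReal.sqrt x) a := by
        apply cfc_congr; intro x hx; simp [smul_eq_mul, NNReal.sqrt_mul]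
    _ = NNReal.sqrt c • cfc (fun x : ℝ≥0 => NNReal.sqrt x) a := cfc_smul _ _ a (by fun_prop)

lemma sqrt_smul (t : ℝ) (ht : 0 ≤ t) (a : H →L[ℂ] H) (ha : 0 ≤ a) :
    CFC.sqrt (t • a) = Real.sqrt t • CFC.sqrt a := by
  rw [toNN_smul t ht, sqrt_smul_nn _ a ha, NNReal.smul_def,
    show ((NNReal.sqrt t.toNNReal : ℝ≥0) : ℝ) = Real.sqrt t by
      rw [Real.coe_sqrt, Real.coe_toNNReal _ ht]]

lemma rpow_smul_nn (c : ℝ≥0) (y : ℝ) (hy : 0 ≤ y) (a : H →L[ℂ] H) (ha : 0 ≤ a) :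
    CFC.rpow (c • a) y = (c ^ y) • CFC.rpow a y := by
  have h1 : ContinuousOn (fun x : ℝ≥0 => x ^ y) ((c • ·) '' (spectrum ℝ≥0 a)) :=
    (NNReal.continuous_rpow_const hy).continuousOn
  have h2 : ContinuousOn (fun x : ℝ≥0 => x ^ y) (spectrum ℝ≥0 a) :=
    (NNReal.continuous_rpow_const hy).continuousOn
  show cfc (fun x : ℝ≥0 => x ^ y) (c • a) = (c ^ y) • cfc (fun x : ℝ≥0 => x ^ y) a
  rw [← cfc_comp_smul c (fun x : ℝ≥0 => x ^ y) a h1 ha]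
  calc cfc (fun x : ℝ≥0 => (c • x) ^ y) a
      = cfc (fun x : ℝ≥0 => (c ^ y) • x ^ y) a := by
        apply cfc_congr; intro x hx; simp [smul_eq_mul, NNReal.mul_rpow]
    _ = (c ^ y) • cfc (fun x : ℝ≥0 => x ^ y) a := cfc_smul _ _ a h2

lemma rpow_smul (t : ℝ) (ht : 0 ≤ t) (y : ℝ) (hy : 0 ≤ y) (a : H →L[ℂ] H) (ha : 0 ≤ a) :
    CFC.rpow (t • a) y = (t ^ y) • CFC.rpow a y := by
  rw [toNN_smul t ht, rpow_smul_nn _ y hy a ha, NNReal.smul_def]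
  congr 1
  rw [NNReal.coe_rpow, Real.coe_toNNReal _ ht]

lemma inverse_smul (t : ℝ) (ht : t ≠ 0) (a : H →L[ℂ] H) (ha : IsUnit a) :
    Ring.inverse (t • a) = t⁻¹ • Ring.inverse a := by
  have p1 : (t • a) * (t⁻¹ • Ring.inverse a) = 1 := by
    rw [smul_mul_smul_comm, Ring.mul_inverse_cancel a ha, mul_inv_cancel₀ ht, one_smul]
  have p2 : (t⁻¹ • Ring.inverse a) * (t • a) = 1 := by
    rw [smul_mul_smul_comm, Ring.inverse_mul_cancel a ha, inv_mul_cancel₀ ht, one_smul]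
  exact Ring.inverse_unit (⟨t • a, t⁻¹ • Ring.inverse a, p1, p2⟩ : (H →L[ℂ] H)ˣ)

lemma isUnit_sqrt (a : H →L[ℂ] H) (ha : 0 ≤ a) (hu : IsUnit a) : IsUnit (CFC.sqrt a) := by
  set b := CFC.sqrt a with hb
  have hbb : b * b = a := CFC.sqrt_mul_sqrt_self a ha
  have hcomm : Commute b a := by rw [← hbb]; exact (Commute.refl b).mul_right (Commute.refl b)
  have hcomm' : Commute b ↑hu.unit⁻¹ := by
    refine Commute.units_inv_right ?_
    simpa [IsUnit.unit_spec] using hcomm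
  refine ⟨⟨b, b * ↑hu.unit⁻¹, ?_, ?_⟩, rfl⟩
  · rw [← mul_assoc, hbb]; simpa using hu.mul_val_inv
  · rw [hcomm'.eq, mul_assoc, hbb]; simpa using hu.val_inv_mul

lemma inverse_nonneg (a : H →L[ℂ] H) (ha : 0 ≤ a) (hu : IsUnit a) : 0 ≤ Ring.inverse a := by
  obtain ⟨u, rfl⟩ := hu
  rw [Ring.inverse_unit, ← CFC.rpow_neg_one_eq_inv u ha]
  exact CFC.rpow_nonneg

lemma indGM_nonneg (k : ℕ) (A : Fin (k + 1) → (H →L[ℂ] H)) (hA : ∀ i, 0 ≤ A i) :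
    0 ≤ indGM k A := by
  cases k with
  | zero => exact hA 0
  | succ k =>
    rw [indGM]
    have hs : IsSelfAdjoint (CFC.sqrt (A (Fin.last (k + 1)))) :=
      IsSelfAdjoint.of_nonneg (CFC.sqrt_nonneg _)
    have key : ∀ (x y : H →L[ℂ] H), 0 ≤ x → IsSelfAdjoint y → 0 ≤ y * x * y := by
      intro x y hx hy
      have := star_left_conjugate_nonneg hx y
      rwa [hy.star_eq] at this
    exact key _ _ CFC.rpow_nonneg hs

lemma scal_eq (a P : ℝ) (ha : 0 < a) (hP : 0 < P) (k : ℕ) :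
    Real.sqrt a * ((a⁻¹ ^ (k + 1) * P) ^ (((k : ℝ) + 1)⁻¹)) ^ (((k : ℝ) + 1) / ((k : ℝ) + 2)) *
        Real.sqrt a
      = (P * a) ^ (((k : ℝ) + 2)⁻¹) := by
  have hX : (0 : ℝ) < a⁻¹ ^ (k + 1) * P := by positivity
  have key : Real.sqrt a *
      ((a⁻¹ ^ (k + 1) * P) ^ (((k : ℝ) + 1)⁻¹)) ^ (((k : ℝ) + 1) / ((k : ℝ) + 2)) * Real.sqrt a
      = a * ((a⁻¹ ^ (k + 1) * P) ^ (((k : ℝ) + 1)⁻¹)) ^ (((k : ℝ) + 1) / ((k : ℝ) + 2)) := by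
    rw [mul_comm, ← mul_assoc, Real.mul_self_sqrt ha.le]
  rw [key, ← Real.rpow_mul hX.le]
  have he : ((k : ℝ) + 1)⁻¹ * (((k : ℝ) + 1) / ((k : ℝ) + 2)) = ((k : ℝ) + 2)⁻¹ := by
    have h1 : ((k : ℝ) + 1) ≠ 0 := by positivity
    have h2 : ((k : ℝ) + 2) ≠ 0 := by positivity
    field_simp
  rw [he]
  have hXd : a⁻¹ ^ (k + 1) * P = (P * a) * a⁻¹ ^ (k + 2) := by
    have : a⁻¹ ^ (k + 2) = a⁻¹ ^ (k + 1) * a⁻¹ := by ring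
    rw [this, ← mul_assoc, mul_comm P a, mul_assoc a P, mul_comm a (P * a⁻¹ ^ (k+1)),
      mul_assoc, mul_inv_cancel₀ ha.ne', mul_one, mul_comm P]
  rw [hXd, Real.mul_rpow (by positivity) (by positivity),
    ← Real.rpow_natCast a⁻¹ (k + 2), ← Real.rpow_mul (by positivity)]
  have h1 : ((k + 2 : ℕ) : ℝ) * ((k : ℝ) + 2)⁻¹ = 1 := by
    have : ((k + 2 : ℕ) : ℝ) = (k : ℝ) + 2 := by push_cast; ring
    rw [this, mul_inv_cancel₀ (by positivity)]
  rw [h1, Real.rpow_one, mul_comm ((P * a) ^ (((k:ℝ)+2)⁻¹)) a⁻¹, ← mul_assoc,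
    mul_inv_cancel₀ ha.ne', one_mul]

end IndGMAux

open IndGMAux in
/-- **Joint homogeneity of the inductive geometric mean.**
`Gₖ(t₁A₁,…,tₖAₖ) = (t₁⋯tₖ)^{1/k} Gₖ(A₁,…,Aₖ)` for positive scalars `t₁,…,tₖ`. -/
theorem indGM_jointly_homogeneous
    (hH : ¬ FiniteDimensional ℂ H) (k : ℕ)
    (t : Fin (k + 1) → ℝ) (ht : ∀ i, 0 < t i)
    (A : Fin (k + 1) → (H →L[ℂ] H)) (hA : ∀ i, IsPosDefInv (A i)) :
    indGM k (fun i => t i • A i) =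
      ((∏ i, t i) ^ (((k : ℝ) + 1)⁻¹)) • indGM k A := by
  induction k with
  | zero =>
    simp only [indGM, Nat.cast_zero, zero_add, inv_one, Real.rpow_one]
    rw [Fin.prod_univ_one]
  | succ k IH =>
    set L : Fin (k + 2) := Fin.last (k + 1) with hL
    set C : H →L[ℂ] H := CFC.sqrt (Ring.inverse (A L)) with hC
    set B : Fin (k + 1) → (H →L[ℂ] H) := fun i => C * A i.castSucc * C with hB
    set s : Fin (k + 1) → ℝ := fun i => (t L)⁻¹ * t i.castSucc with hs
    have htL : 0 < t L := ht L
    have hinv_nn : 0 ≤ Ring.inverse (A L) := inverse_nonneg _ (hA L).1 (hA L).2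
    have hinv_u : IsUnit (Ring.inverse (A L)) := (hA L).2.ringInverse
    have hCnn : 0 ≤ C := CFC.sqrt_nonneg _
    have hCu : IsUnit C := isUnit_sqrt _ hinv_nn hinv_u
    have hCsa : IsSelfAdjoint C := IsSelfAdjoint.of_nonneg hCnn
    have hBpos : ∀ i, IsPosDefInv (B i) := by
      intro i
      constructor
      · calc (0 : H →L[ℂ] H) ≤ star C * A i.castSucc * C :=
              star_left_conjugate_nonneg (hA i.castSucc).1 C
          _ = B i := by rw [hB, hCsa.star_eq]
      · exact (hCu.mul (hA i.castSucc).2).mul hCu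
    have hspos : ∀ i, 0 < s i := fun i => mul_pos (inv_pos.mpr htL) (ht i.castSucc)
    -- unfold and rewrite the inner arguments
    have harg : (fun i : Fin (k + 1) =>
        CFC.sqrt (Ring.inverse ((fun j => t j • A j) L)) * (fun j => t j • A j) i.castSucc *
          CFC.sqrt (Ring.inverse ((fun j => t j • A j) L))) = fun i => s i • B i := by
      funext i
      have h1 : Ring.inverse ((fun j => t j • A j) L) = (t L)⁻¹ • Ring.inverse (A L) :=
        inverse_smul _ htL.ne' _ (hA L).2
      have h2 : CFC.sqrt ((t L)⁻¹ • Ring.inverse (A L)) = Real.sqrt (t L)⁻¹ • C :=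
        sqrt_smul _ (by positivity) _ hinv_nn
      simp only [h1, h2]
      rw [smul_mul_smul_comm, smul_mul_smul_comm]
      show (Real.sqrt (t L)⁻¹ * t i.castSucc * Real.sqrt (t L)⁻¹) • (C * A i.castSucc * C)
        = ((t L)⁻¹ * t i.castSucc) • (C * A i.castSucc * C)
      congr 1
      have h3 : Real.sqrt (t L)⁻¹ * t i.castSucc * Real.sqrt (t L)⁻¹
          = (Real.sqrt (t L)⁻¹ * Real.sqrt (t L)⁻¹) * t i.castSucc := by ring
      rw [h3, Real.mul_self_sqrt (inv_nonneg.mpr htL.le)]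
    have hnnB : 0 ≤ indGM k B := indGM_nonneg k B (fun i => (hBpos i).1)
    have hprod_s : (0 : ℝ) < ∏ i, s i := Finset.prod_pos fun i _ => hspos i
    have hr : (0 : ℝ) < (∏ i, s i) ^ (((k : ℝ) + 1)⁻¹) := Real.rpow_pos_of_pos hprod_s _
    calc indGM (k + 1) (fun i => t i • A i)
        = CFC.sqrt (t L • A L) *
            CFC.rpow (indGM k (fun i => s i • B i)) (((k : ℝ) + 1) / ((k : ℝ) + 2)) *
            CFC.sqrt (t L • A L) := by
          rw [indGM, harg]
      _ = (Real.sqrt (t L) • CFC.sqrt (A L)) *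
            (((∏ i, s i) ^ (((k : ℝ) + 1)⁻¹)) ^ (((k : ℝ) + 1) / ((k : ℝ) + 2)) •
              CFC.rpow (indGM k B) (((k : ℝ) + 1) / ((k : ℝ) + 2))) *
            (Real.sqrt (t L) • CFC.sqrt (A L)) := by
          rw [sqrt_smul _ htL.le _ (hA L).1, IH s hspos B hBpos,
            rpow_smul _ hr.le _ (by positivity) _ hnnB]
      _ = (Real.sqrt (t L) * ((∏ i, s i) ^ (((k : ℝ) + 1)⁻¹)) ^ (((k : ℝ) + 1) / ((k : ℝ) + 2)) *
            Real.sqrt (t L)) •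
            (CFC.sqrt (A L) * CFC.rpow (indGM k B) (((k : ℝ) + 1) / ((k : ℝ) + 2)) *
              CFC.sqrt (A L)) := by
          rw [smul_mul_smul_comm, smul_mul_smul_comm]
      _ = ((∏ i, t i) ^ ((((k + 1 : ℕ) : ℝ) + 1)⁻¹)) • indGM (k + 1) A := by
          have hunf : indGM (k + 1) A = CFC.sqrt (A L) *
              CFC.rpow (indGM k B) (((k : ℝ) + 1) / ((k : ℝ) + 2)) * CFC.sqrt (A L) := by
            rw [indGM]
          rw [hunf]
          congr 1
          have hprod : ∏ i, s i = (t L)⁻¹ ^ (k + 1) * ∏ i : Fin (k + 1), t i.castSucc := by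
            rw [hs, Finset.prod_mul_distrib, Finset.prod_const, Finset.card_univ,
              Fintype.card_fin]
          have hP0 : (0 : ℝ) < ∏ i : Fin (k + 1), t i.castSucc :=
            Finset.prod_pos fun i _ => ht _
          have hall : ∏ i : Fin (k + 2), t i = (∏ i : Fin (k + 1), t i.castSucc) * t L := by
            rw [Fin.prod_univ_castSucc]
          rw [hprod, hall]
          have : (((k + 1 : ℕ) : ℝ) + 1)⁻¹ = ((k : ℝ) + 2)⁻¹ := by push_cast; ring_nf
          rw [this]
          exact scal_eq (t L) _ htL hP0 k
end
end

section
/- For every k ≥ 1 and every k-tuple (A₁,…,Aₖ) of positive definite complex n×n matrices, the inductive geometric mean satisfies the determinant identity det Gₖ(A₁,…,Aₖ) = (det A₁ ⋯ det Aₖ)^{1/k}. -/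
set_option synthInstance.maxHeartbeats 400000
set_option maxHeartbeats 1000000

open scoped ComplexOrder

noncomputable section

/-- The inductive geometric mean of positive definite complex matrices: `indGMMat k` is the
geometric mean `G_{k+1}` of `k+1` matrix variables, defined recursively by `G₁(A) = A` and
`G_{k+1}(A₁,…,A_{k+1}) = A_{k+1}^{1/2} Gₖ(A_{k+1}^{-1/2}A₁A_{k+1}^{-1/2},…)^{k/(k+1)} A_{k+1}^{1/2}`,
with fractional powers of positive definite matrices taken via the continuous functional
calculus (spectral decomposition); here `B^{-1/2}` is the positive square root of `B⁻¹`. -/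
noncomputable def indGMMat {n : ℕ} :
    (k : ℕ) → (Fin (k + 1) → Matrix (Fin n) (Fin n) ℂ) → Matrix (Fin n) (Fin n) ℂ
  | 0, A => A 0
  | (k + 1), A =>
      cfc Real.sqrt (A (Fin.last (k + 1))) *
        cfc (fun x : ℝ => x ^ ((k + 1 : ℝ) / (k + 2)))
          (indGMMat k (fun i : Fin (k + 1) =>
            cfc Real.sqrt ((A (Fin.last (k + 1)))⁻¹) * A i.castSucc *
              cfc Real.sqrt ((A (Fin.last (k + 1)))⁻¹))) *
        cfc Real.sqrt (A (Fin.last (k + 1)))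

namespace IndGMAux

open Matrix

variable {n : ℕ}

lemma det_re_of_posDef {M : Matrix (Fin n) (Fin n) ℂ} (hM : M.PosDef) :
    M.det = (M.det.re : ℂ) ∧ 0 < M.det.re := by
  have h := hM.det_pos
  rw [Complex.lt_def] at h
  obtain ⟨hre, him⟩ := h
  simp only [Complex.zero_re, Complex.zero_im] at hre him
  exact ⟨Complex.ext rfl (by simp [← him]), hre⟩

lemma prod_eigenvalues_eq {M : Matrix (Fin n) (Fin n) ℂ} (hM : M.IsHermitian) :
    (∏ i, hM.eigenvalues i) = M.det.re := by
  have h := hM.det_eq_prod_eigenvalues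
  have : M.det = ((∏ i, hM.eigenvalues i : ℝ) : ℂ) := by rw [h]; push_cast; rfl
  rw [this, Complex.ofReal_re]

lemma cfc_det' {M : Matrix (Fin n) (Fin n) ℂ} (hM : M.IsHermitian) (f : ℝ → ℝ) :
    (cfc f M).det = ((∏ i, f (hM.eigenvalues i) : ℝ) : ℂ) := by
  rw [hM.cfc_eq, Matrix.IsHermitian.cfc, Unitary.conjStarAlgAut_apply, det_mul, det_mul]
  have hU : det (hM.eigenvectorUnitary : Matrix (Fin n) (Fin n) ℂ) *
      det (star (hM.eigenvectorUnitary : Matrix (Fin n) (Fin n) ℂ)) = 1 := by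
    rw [← det_mul, Unitary.mul_star_self_of_mem (SetLike.coe_mem _), det_one]
  rw [mul_right_comm, hU, one_mul, det_diagonal]
  push_cast
  rfl

lemma posDef_conj_isUnit {B X : Matrix (Fin n) (Fin n) ℂ} (hB : IsUnit B) (hX : X.PosDef) :
    (B * X * Bᴴ).PosDef := by
  refine PosDef.of_dotProduct_mulVec_pos ?_ fun x hx => ?_
  · show (B * X * Bᴴ)ᴴ = B * X * Bᴴ
    simp [conjTranspose_mul, hX.1.eq, Matrix.mul_assoc]
  · have hBH : IsUnit (Bᴴ) := by
      rw [isUnit_iff_isUnit_det] at hB ⊢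
      rw [det_conjTranspose]
      exact hB.star
    have hinj : Function.Injective (Bᴴ).mulVec := mulVec_injective_iff_isUnit.mpr hBH
    have h : Bᴴ *ᵥ x ≠ 0 := fun h => hx (hinj (by simpa using h))
    have := hX.dotProduct_mulVec_pos h
    have hrw : star x ⬝ᵥ (B * X * Bᴴ) *ᵥ x = star (Bᴴ *ᵥ x) ⬝ᵥ X *ᵥ (Bᴴ *ᵥ x) := by
      simp only [star_mulVec, dotProduct_mulVec, vecMul_vecMul, conjTranspose_conjTranspose,
        Matrix.mul_assoc]
    rwa [hrw]

lemma posDef_conj_herm {S X : Matrix (Fin n) (Fin n) ℂ} (hS : S.PosDef) (hX : X.PosDef) :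
    (S * X * S).PosDef := by
  have := posDef_conj_isUnit hS.isUnit hX
  rwa [hS.1.eq] at this

lemma cfc_posDef {M : Matrix (Fin n) (Fin n) ℂ} (hM : M.PosDef) (f : ℝ → ℝ)
    (hf : ∀ x, 0 < x → 0 < f x) : (cfc f M).PosDef := by
  rw [hM.1.cfc_eq, Matrix.IsHermitian.cfc]
  have hD : (diagonal (RCLike.ofReal ∘ f ∘ hM.1.eigenvalues) : Matrix (Fin n) (Fin n) ℂ).PosDef :=
    Matrix.PosDef.diagonal fun i => by
      simpa using Complex.zero_lt_real.mpr (hf _ (hM.eigenvalues_pos i))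
  have hU : IsUnit (hM.1.eigenvectorUnitary : Matrix (Fin n) (Fin n) ℂ) :=
    (Unitary.toUnits hM.1.eigenvectorUnitary).isUnit
  simpa [star_eq_conjTranspose] using posDef_conj_isUnit hU hD

lemma cfc_rpow_det {M : Matrix (Fin n) (Fin n) ℂ} (hM : M.PosDef) {f : ℝ → ℝ} {r : ℝ}
    (hfr : ∀ x, 0 < x → f x = x ^ r) :
    (cfc f M).det = ((M.det.re ^ r : ℝ) : ℂ) := by
  rw [cfc_det' hM.1]
  congr 1
  rw [Finset.prod_congr rfl fun i _ => hfr _ (hM.eigenvalues_pos i),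
    Real.finset_prod_rpow _ _ (fun i _ => (hM.eigenvalues_pos i).le), prod_eigenvalues_eq hM.1]

lemma key_real (k : ℕ) (b : ℝ) (hb : 0 < b) (r : Fin (k + 1) → ℝ) (hr : ∀ i, 0 < r i) :
    b ^ ((1:ℝ)/2) * ((b⁻¹ ^ (k+1) * ∏ i, r i) ^ ((k:ℝ)+1)⁻¹) ^ (((k:ℝ)+1)/((k:ℝ)+2)) *
        b ^ ((1:ℝ)/2)
      = ((∏ i, r i) * b) ^ (((k:ℝ)+1+1))⁻¹ := by
  have hP : 0 < ∏ i, r i := Finset.prod_pos fun i _ => hr i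
  have h1 : (0:ℝ) < b⁻¹ ^ (k+1) * ∏ i, r i := by positivity
  have h2 : (0:ℝ) < (b⁻¹ ^ (k+1) * ∏ i, r i) ^ ((k:ℝ)+1)⁻¹ := Real.rpow_pos_of_pos h1 _
  have hLpos : (0:ℝ) < b ^ ((1:ℝ)/2) *
      ((b⁻¹ ^ (k+1) * ∏ i, r i) ^ ((k:ℝ)+1)⁻¹) ^ (((k:ℝ)+1)/((k:ℝ)+2)) * b ^ ((1:ℝ)/2) := by
    positivity
  have hRpos : (0:ℝ) < ((∏ i, r i) * b) ^ (((k:ℝ)+1+1))⁻¹ := by positivity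
  refine Real.log_injOn_pos (Set.mem_Ioi.mpr hLpos) (Set.mem_Ioi.mpr hRpos) ?_
  have hk1 : ((k:ℝ)+1) ≠ 0 := by positivity
  have hk2 : ((k:ℝ)+2) ≠ 0 := by positivity
  rw [Real.log_mul (by positivity) (by positivity), Real.log_mul (by positivity) (by positivity),
    Real.log_rpow hb, Real.log_rpow h2, Real.log_rpow h1,
    Real.log_rpow (by positivity : (0:ℝ) < (∏ i, r i) * b), Real.log_mul hP.ne' hb.ne',
    Real.log_mul (by positivity) hP.ne', Real.log_pow, Real.log_inv]
  push_cast
  field_simp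
  ring

lemma indGMMat_main : ∀ (k : ℕ) (A : Fin (k+1) → Matrix (Fin n) (Fin n) ℂ),
    (∀ i, (A i).PosDef) →
    (indGMMat k A).PosDef ∧
    (indGMMat k A).det = (((∏ i, (A i).det.re) ^ ((k:ℝ)+1)⁻¹ : ℝ) : ℂ)
  | 0, A, hA => by
    refine ⟨hA 0, ?_⟩
    show (A 0).det = _
    rw [Fin.prod_univ_one, (det_re_of_posDef (hA 0)).1]
    norm_num
  | (k+1), A, hA => by
    have heq : indGMMat (k+1) A =
        cfc Real.sqrt (A (Fin.last (k + 1))) *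
          cfc (fun x : ℝ => x ^ ((k + 1 : ℝ) / (k + 2)))
            (indGMMat k (fun i : Fin (k + 1) =>
              cfc Real.sqrt ((A (Fin.last (k + 1)))⁻¹) * A i.castSucc *
                cfc Real.sqrt ((A (Fin.last (k + 1)))⁻¹))) *
          cfc Real.sqrt (A (Fin.last (k + 1))) := by
      rw [indGMMat]
    set B := A (Fin.last (k+1)) with hBdef
    have hB : B.PosDef := hA _
    have hBinv : B⁻¹.PosDef := hB.inv
    set T := cfc Real.sqrt B⁻¹ with hTdef
    set S := cfc Real.sqrt B with hSdef
    have hT : T.PosDef := cfc_posDef hBinv _ fun x hx => Real.sqrt_pos.mpr hx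
    have hS : S.PosDef := cfc_posDef hB _ fun x hx => Real.sqrt_pos.mpr hx
    set A' := fun i : Fin (k+1) => T * A i.castSucc * T with hA'def
    have hA' : ∀ i, (A' i).PosDef := fun i => posDef_conj_herm hT (hA i.castSucc)
    obtain ⟨hG, hGdet⟩ := indGMMat_main k A' hA'
    set G := indGMMat k A' with hGdef
    have hPow : (cfc (fun x : ℝ => x ^ ((k+1:ℝ)/(k+2))) G).PosDef :=
      cfc_posDef hG _ fun x hx => Real.rpow_pos_of_pos hx _
    refine ⟨heq ▸ posDef_conj_herm hS hPow, ?_⟩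
    set b := B.det.re with hbdef
    have hb : 0 < b := (det_re_of_posDef hB).2
    have hbinvdet : B⁻¹.det.re = b⁻¹ := by
      have h : B⁻¹.det = ((b⁻¹ : ℝ) : ℂ) := by
        rw [Matrix.det_nonsing_inv, Ring.inverse_eq_inv', (det_re_of_posDef hB).1,
          Complex.ofReal_inv]
      rw [h, Complex.ofReal_re]
    have hSdet : S.det = ((b ^ ((1:ℝ)/2) : ℝ) : ℂ) :=
      cfc_rpow_det hB fun x _ => Real.sqrt_eq_rpow x
    have hTdet : T.det = (((b⁻¹) ^ ((1:ℝ)/2) : ℝ) : ℂ) := by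
      have h := cfc_rpow_det hBinv (f := Real.sqrt) (r := (1:ℝ)/2) fun x _ => Real.sqrt_eq_rpow x
      rwa [hbinvdet] at h
    set r := fun i : Fin (k+1) => (A i.castSucc).det.re with hrdef
    have hrpos : ∀ i, 0 < r i := fun i => (det_re_of_posDef (hA i.castSucc)).2
    have hhalf : b⁻¹ ^ ((1:ℝ)/2) * b⁻¹ ^ ((1:ℝ)/2) = b⁻¹ := by
      rw [← Real.rpow_add (by positivity)]; norm_num
    have hA'detre : ∀ i, (A' i).det.re = b⁻¹ * r i := by
      intro i
      have h : (A' i).det = ((b⁻¹ ^ ((1:ℝ)/2) * r i * b⁻¹ ^ ((1:ℝ)/2) : ℝ) : ℂ) := by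
        show (T * A i.castSucc * T).det = _
        rw [det_mul, det_mul, hTdet, (det_re_of_posDef (hA i.castSucc)).1]
        push_cast
        ring
      rw [h, Complex.ofReal_re, mul_right_comm, hhalf]
    have hprodA' : (∏ i, (A' i).det.re) = b⁻¹ ^ (k+1) * ∏ i, r i := by
      rw [Finset.prod_congr rfl fun i _ => hA'detre i, Finset.prod_mul_distrib,
        Finset.prod_const, Finset.card_univ, Fintype.card_fin]
    have hGdetre : G.det.re = ((b⁻¹ ^ (k+1) * ∏ i, r i) ^ ((k:ℝ)+1)⁻¹) := by
      rw [hGdet, Complex.ofReal_re, hprodA']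
    have hPowdet : (cfc (fun x : ℝ => x ^ ((k+1:ℝ)/(k+2))) G).det =
        (((G.det.re ^ ((k+1:ℝ)/(k+2)) : ℝ)) : ℂ) :=
      cfc_rpow_det hG fun x _ => rfl
    rw [heq, det_mul, det_mul, hSdet, hPowdet, hGdetre]
    have hprodall : (∏ i : Fin (k+2), (A i).det.re) = (∏ i, r i) * b := by
      rw [Fin.prod_univ_castSucc]
    rw [hprodall]
    push_cast
    rw [← Complex.ofReal_mul, ← Complex.ofReal_mul]
    rw [key_real k b hb r hrpos]

end IndGMAux

/-- **Determinant identity for the inductive geometric mean of matrices.**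
`det Gₖ(A₁,…,Aₖ) = (det A₁ ⋯ det Aₖ)^{1/k}` for positive definite complex matrices. -/
theorem indGMMat_det {n : ℕ} (k : ℕ)
    (A : Fin (k + 1) → Matrix (Fin n) (Fin n) ℂ) (hA : ∀ i, (A i).PosDef) :
    (indGMMat k A).det = (∏ i, (A i).det) ^ (((k : ℂ) + 1)⁻¹) := by

  obtain ⟨hpos, hdet⟩ := IndGMAux.indGMMat_main k A hA
  rw [hdet]
  have h2 : (∏ i, (A i).det) = ((∏ i, (A i).det.re : ℝ) : ℂ) := by
    rw [Finset.prod_congr rfl fun i _ => (IndGMAux.det_re_of_posDef (hA i)).1]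
    push_cast
    rfl
  have hnn : (0:ℝ) ≤ ∏ i, (A i).det.re :=
    Finset.prod_nonneg fun i _ => ((IndGMAux.det_re_of_posDef (hA i)).2).le
  rw [h2, show (((k:ℂ)) + 1)⁻¹ = ((((k:ℝ)+1)⁻¹ : ℝ) : ℂ) by push_cast; ring,
    ← Complex.ofReal_cpow hnn (((k:ℝ)+1)⁻¹)]
end
end

section
/- Let H be an infinite-dimensional complex Hilbert space. For every k ≥ 1 and every k-tuple (A₁,…,Aₖ) of positive definite invertible bounded operators on H, the inductive geometric mean is bounded between the harmonic and arithmetic means: k·(A₁^{−1} + ⋯ + Aₖ^{−1})^{−1} ≤ Gₖ(A₁,…,Aₖ) ≤ (A₁ + ⋯ + Aₖ)/k in the Loewner order. -/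
set_option linter.unusedSectionVars false
set_option linter.unusedVariables false


set_option synthInstance.maxHeartbeats 400000
set_option maxHeartbeats 1000000

noncomputable section

variable {H : Type*} [NormedAddCommGroup H] [InnerProductSpace ℂ H] [CompleteSpace H]

open scoped NNReal

namespace IndGMAux

variable {a b c : H →L[ℂ] H}

lemma ringInverse_eq (h1 : a * b = 1) (h2 : b * a = 1) : Ring.inverse a = b :=
  Ring.inverse_unit (⟨a, b, h1, h2⟩ : (H →L[ℂ] H)ˣ)

lemma pdi_inv (h : IsPosDefInv a) : IsPosDefInv (Ring.inverse a) := by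
  obtain ⟨ha, hu⟩ := h
  constructor
  · rw [← hu.unit_spec, Ring.inverse_unit]
    exact CFC.inv_nonneg_of_nonneg hu.unit (by rw [hu.unit_spec]; exact ha)
  · rw [← hu.unit_spec, Ring.inverse_unit]
    exact hu.unit⁻¹.isUnit

lemma pdi_rpow (h : IsPosDefInv a) (t : ℝ) : IsPosDefInv (CFC.rpow a t) := by
  obtain ⟨ha, hu⟩ := h
  have h0 := hu.isStrictlyPositive ha
  exact ⟨CFC.rpow_nonneg,
    ⟨⟨_, _, CFC.rpow_mul_rpow_neg t h0, CFC.rpow_neg_mul_rpow t h0⟩, rfl⟩⟩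

lemma pdi_sqrt (h : IsPosDefInv a) : IsPosDefInv (CFC.sqrt a) := by
  rw [CFC.sqrt_eq_rpow]
  exact pdi_rpow h _

lemma ringInverse_ringInverse (h : IsUnit a) : Ring.inverse (Ring.inverse a) = a := by
  rw [← h.unit_spec, Ring.inverse_unit, Ring.inverse_unit, inv_inv]

lemma ringInverse_rpow (h : IsPosDefInv a) (t : ℝ) :
    CFC.rpow (Ring.inverse a) t = Ring.inverse (CFC.rpow a t) := by
  obtain ⟨ha, hu⟩ := h
  have h0 := hu.isStrictlyPositive ha
  have h1 : CFC.rpow (Ring.inverse a) t = CFC.rpow a (-t) := by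
    rw [← hu.unit_spec, Ring.inverse_unit]
    exact (CFC.rpow_neg hu.unit t (by rw [hu.unit_spec]; exact ha)).symm
  have h2 : Ring.inverse (CFC.rpow a t) = CFC.rpow a (-t) :=
    ringInverse_eq (CFC.rpow_mul_rpow_neg t h0) (CFC.rpow_neg_mul_rpow t h0)
  rw [h1, h2]

lemma ringInverse_mul_self (h : IsUnit a) :
    Ring.inverse a * Ring.inverse a = Ring.inverse (a * a) := by
  rw [← h.unit_spec, ← Units.val_mul, Ring.inverse_unit, Ring.inverse_unit, mul_inv_rev,
    Units.val_mul]

lemma sqrt_ringInverse (h : IsPosDefInv a) :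
    CFC.sqrt (Ring.inverse a) = Ring.inverse (CFC.sqrt a) := by
  refine CFC.sqrt_unique ?_ (pdi_inv (pdi_sqrt h)).1
  rw [ringInverse_mul_self (pdi_sqrt h).2, CFC.sqrt_mul_sqrt_self a h.1]

lemma ringInverse_conj (hc : IsUnit c) (ha : IsUnit a) :
    Ring.inverse (c * a * c) = Ring.inverse c * Ring.inverse a * Ring.inverse c := by
  rw [← hc.unit_spec, ← ha.unit_spec, ← Units.val_mul, ← Units.val_mul, Ring.inverse_unit,
    Ring.inverse_unit, Ring.inverse_unit, ← Units.val_mul, ← Units.val_mul]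
  congr 1

lemma conj_cancel (hc : IsUnit c) (a : H →L[ℂ] H) :
    c * (Ring.inverse c * a * Ring.inverse c) * c = a := by
  simp only [mul_assoc, Ring.inverse_mul_cancel c hc, mul_one]
  rw [← mul_assoc, Ring.mul_inverse_cancel c hc, one_mul]

lemma young (a : H →L[ℂ] H) (ha : 0 ≤ a) {t : ℝ} (ht0 : 0 ≤ t) (ht1 : t ≤ 1) :
    CFC.rpow a t ≤ t • a + (1 - t) • 1 := by
  set w₁ : ℝ≥0 := ⟨t, ht0⟩ with hw₁
  have hw₁1 : w₁ ≤ 1 := by exact_mod_cast ht1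
  set w₂ : ℝ≥0 := 1 - w₁ with hw₂
  have hsum : w₁ + w₂ = 1 := by rw [hw₂, add_tsub_cancel_of_le hw₁1]
  have key : cfc (fun x : ℝ≥0 => x ^ t) a ≤ cfc (fun x : ℝ≥0 => w₁ * x + w₂) a := by
    refine cfc_mono (fun x _ => ?_) ?_ ?_
    · have := NNReal.geom_mean_le_arith_mean2_weighted w₁ w₂ x 1 hsum
      simp at this; exact this
    · exact (NNReal.continuous_rpow_const ht0).continuousOn
    · exact ((continuous_const.mul continuous_id).add continuous_const).continuousOn
  have hrhs : cfc (fun x : ℝ≥0 => w₁ * x + w₂) a = t • a + (1 - t) • 1 := by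
    rw [cfc_add a (fun x => w₁ * x) (fun _ => w₂)
        ((continuous_const.mul continuous_id).continuousOn) (continuous_const.continuousOn),
      cfc_const_mul w₁ (fun x : ℝ≥0 => x) a continuous_id.continuousOn, cfc_id' ℝ≥0 a,
      cfc_const w₂ a, Algebra.algebraMap_eq_smul_one]
    have h2 : (w₂ : ℝ) = 1 - t := by rw [hw₂, NNReal.coe_sub hw₁1]; simp [hw₁]; rfl
    rw [NNReal.smul_def, NNReal.smul_def, h2]
    rfl
  calc CFC.rpow a t = cfc (fun x : ℝ≥0 => x ^ t) a := CFC.rpow_def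
    _ ≤ _ := key
    _ = _ := hrhs

lemma ringInverse_antitone (ha : IsPosDefInv a) (hb : IsUnit b) (hab : a ≤ b) :
    Ring.inverse b ≤ Ring.inverse a := by
  have h1 : (ha.2.unit : H →L[ℂ] H) ≤ hb.unit := by
    rw [ha.2.unit_spec, hb.unit_spec]; exact hab
  have h2 := CStarAlgebra.inv_le_inv (a := ha.2.unit)
    (by rw [ha.2.unit_spec]; exact ha.1) h1
  have e1 : (↑(hb.unit)⁻¹ : H →L[ℂ] H) = Ring.inverse b := by
    conv_rhs => rw [← hb.unit_spec, Ring.inverse_unit]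
  have e2 : (↑(ha.2.unit)⁻¹ : H →L[ℂ] H) = Ring.inverse a := by
    conv_rhs => rw [← ha.2.unit_spec, Ring.inverse_unit]
  rwa [e1, e2] at h2

lemma ringInverse_smul {r : ℝ} (hr : r ≠ 0) (ha : IsUnit a) :
    Ring.inverse (r • a) = r⁻¹ • Ring.inverse a := by
  refine ringInverse_eq ?_ ?_
  · rw [smul_mul_smul_comm, mul_inv_cancel₀ hr, Ring.mul_inverse_cancel a ha, one_smul]
  · rw [smul_mul_smul_comm, inv_mul_cancel₀ hr, Ring.inverse_mul_cancel a ha, one_smul]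

lemma indGM_main (k : ℕ) (A : Fin (k + 1) → (H →L[ℂ] H)) (hA : ∀ i, IsPosDefInv (A i)) :
    IsPosDefInv (indGM k A) ∧
    indGM k (fun i => Ring.inverse (A i)) = Ring.inverse (indGM k A) ∧
    indGM k A ≤ ((k : ℝ) + 1)⁻¹ • ∑ i, A i := by
  induction k with
  | zero =>
    refine ⟨hA 0, rfl, ?_⟩
    simp [indGM, Fin.sum_univ_one]
  | succ k IH =>
    set B := A (Fin.last (k + 1)) with hBdef
    have hB : IsPosDefInv B := hA (Fin.last (k + 1))
    have hs : IsPosDefInv (CFC.sqrt B) := pdi_sqrt hB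
    have hsi : CFC.sqrt (Ring.inverse B) = Ring.inverse (CFC.sqrt B) := sqrt_ringInverse hB
    set s := CFC.sqrt B with hsdef
    set C := fun i : Fin (k + 1) => CFC.sqrt (Ring.inverse B) * A i.castSucc *
        CFC.sqrt (Ring.inverse B) with hCdef
    have hC : ∀ i, IsPosDefInv (C i) := by
      intro i
      constructor
      · exact conjugate_nonneg_of_nonneg (hA _).1 (CFC.sqrt_nonneg _)
      · rw [hCdef]
        simp only [hsi]
        exact ((pdi_inv hs).2.mul (hA _).2).mul (pdi_inv hs).2
    obtain ⟨hXpdi, hXinv, hXle⟩ := IH C hC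
    set X := indGM k C with hXdef
    set t : ℝ := ((k : ℝ) + 1) / ((k : ℝ) + 2) with htdef
    have hk2 : (0 : ℝ) < (k : ℝ) + 2 := by positivity
    have ht0 : 0 ≤ t := by positivity
    have ht1 : t ≤ 1 := by
      rw [htdef, div_le_one hk2]; linarith
    have h1t : 1 - t = ((k : ℝ) + 2)⁻¹ := by
      rw [htdef]; field_simp; norm_num
    have hunfold : indGM (k + 1) A = s * CFC.rpow X t * s := by
      simp only [indGM]; rfl
    have hpdi : IsPosDefInv (indGM (k + 1) A) := by
      rw [hunfold]
      exact ⟨conjugate_nonneg_of_nonneg CFC.rpow_nonneg hs.1,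
        (hs.2.mul (pdi_rpow hXpdi t).2).mul hs.2⟩
    refine ⟨hpdi, ?_, ?_⟩
    · -- inverse identity
      have hinvB : Ring.inverse (Ring.inverse B) = B := ringInverse_ringInverse hB.2
      have hCinv : (fun i : Fin (k+1) => CFC.sqrt (Ring.inverse (Ring.inverse B)) *
          Ring.inverse (A i.castSucc) * CFC.sqrt (Ring.inverse (Ring.inverse B)))
          = fun i => Ring.inverse (C i) := by
        funext i
        rw [hCdef]
        simp only [hsi, hinvB]
        rw [ringInverse_conj (pdi_inv hs).2 (hA _).2, ringInverse_ringInverse hs.2]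
      have : indGM (k + 1) (fun i => Ring.inverse (A i)) =
          CFC.sqrt (Ring.inverse B) * CFC.rpow (indGM k (fun i => Ring.inverse (C i))) t *
            CFC.sqrt (Ring.inverse B) := by
        simp only [indGM, ← hCinv]; rfl
      rw [this, hXinv, hsi, ringInverse_rpow hXpdi, hunfold,
        ringInverse_conj hs.2 (pdi_rpow hXpdi t).2]
    · -- arithmetic mean bound
      rw [hunfold]
      have hY : CFC.rpow X t ≤ ((k : ℝ) + 2)⁻¹ • ∑ i, C i + ((k : ℝ) + 2)⁻¹ • 1 := by
        refine (young X hXpdi.1 ht0 ht1).trans ?_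
        rw [h1t]
        gcongr
        calc t • X ≤ t • (((k : ℝ) + 1)⁻¹ • ∑ i, C i) :=
              smul_le_smul_of_nonneg_left hXle ht0
          _ = ((k : ℝ) + 2)⁻¹ • ∑ i, C i := by
              rw [smul_smul]
              congr 1
              rw [htdef]
              field_simp
      have hconj := conjugate_le_conjugate_of_nonneg hY hs.1
      refine hconj.trans_eq ?_
      rw [mul_add, add_mul, mul_smul_comm, mul_smul_comm, smul_mul_assoc, smul_mul_assoc,
        ← smul_add]
      have hss : s * 1 * s = B := by rw [mul_one, hsdef, CFC.sqrt_mul_sqrt_self B hB.1]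
      have hsum : s * (∑ i, C i) * s = ∑ i : Fin (k + 1), A i.castSucc := by
        rw [Finset.mul_sum, Finset.sum_mul]
        refine Finset.sum_congr rfl fun i _ => ?_
        rw [hCdef]
        simp only [hsi]
        exact conj_cancel hs.2 _
      rw [hss, hsum, ← Fin.sum_univ_castSucc]
      congr 1
      push_cast
      ring

end IndGMAux

open IndGMAux in

/-- **The harmonic–geometric–arithmetic mean inequality.** The inductive geometric mean is
bounded between the symmetric harmonic and arithmetic means:
`k (A₁⁻¹ + ⋯ + Aₖ⁻¹)⁻¹ ≤ Gₖ(A₁,…,Aₖ) ≤ (A₁ + ⋯ + Aₖ)/k`. -/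
theorem indGM_harmonic_arithmetic_bounds
    (hH : ¬ FiniteDimensional ℂ H) (k : ℕ)
    (A : Fin (k + 1) → (H →L[ℂ] H)) (hA : ∀ i, IsPosDefInv (A i)) :
    ((k : ℝ) + 1) • Ring.inverse (∑ i, Ring.inverse (A i)) ≤ indGM k A ∧
      indGM k A ≤ ((k : ℝ) + 1)⁻¹ • ∑ i, A i := by
  obtain ⟨hpdi, hinv, hle⟩ := indGM_main k A hA
  refine ⟨?_, hle⟩
  have hA' : ∀ i, IsPosDefInv (Ring.inverse (A i)) := fun i => pdi_inv (hA i)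
  obtain ⟨-, -, hle'⟩ := indGM_main k (fun i => Ring.inverse (A i)) hA'
  rw [hinv] at hle'
  set T : H →L[ℂ] H := ((k : ℝ) + 1)⁻¹ • ∑ i, Ring.inverse (A i) with hT
  have hk1 : ((k : ℝ) + 1) ≠ 0 := by positivity
  have hTu : IsUnit T := CStarAlgebra.isUnit_of_le _ hle' ((pdi_inv hpdi).2.isStrictlyPositive (pdi_inv hpdi).1)
  have hRT : Ring.inverse T ≤ indGM k A := by
    have := ringInverse_antitone (pdi_inv hpdi) hTu hle'
    rwa [ringInverse_ringInverse hpdi.2] at this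
  have hSsum : (∑ i, Ring.inverse (A i)) = ((k : ℝ) + 1) • T := by
    rw [hT, smul_smul, mul_inv_cancel₀ hk1, one_smul]
  rw [hSsum, ringInverse_smul hk1 hTu, smul_smul, mul_inv_cancel₀ hk1, one_smul]
  exact hRT
end
end
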